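/- arXiv:1904.08687 — 2 statements merged into one kernel-verified Lean document; each statement's English description precedes it below -/
import Mathlib

section
/- Let (R, 𝔪, k) be a Cohen–Macaulay Noetherian local ring of Krull dimension d ≥ 2. Let x ∈ 𝔪 be a nonzerodivisor on R and let 𝔭 be a minimal prime ideal over the principal ideal (x). Then 𝔭 ≠ 𝔪, and the injective hull E = E(R/𝔭) satisfies: (i) Hom_R(k, E) = 0, and Ext^i_R(k, E) = 0 for all i ≥ 0, so E ∈ hCM(R); (ii) x annihilates a nonzero element of E (namely any e ∈ E with annihilator 𝔭), so x is a zerodivisor on E and no system of parameters of R whose first element is x is a weakly E-regular sequence. -/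
/-!
Common setup: `(R, 𝔪, k)` is a commutative Noetherian local ring of Krull dimension `d`.
We express vanishing of `Ext^i_R(M, N)` and `Tor_i^R(M, N)` via the categorical
`Ext`/`Tor` functors on `ModuleCat R`.
-/

open CategoryTheory Opposite IsLocalRing

universe u

/-- `ExtV R i M N` asserts that the Ext group `Ext^i_R(M, N)` vanishes. -/
noncomputable def ExtV (R : Type u) [CommRing R] (i : ℕ) (M N : Type u)
    [AddCommGroup M] [Module R M] [AddCommGroup N] [Module R N] : Prop :=
  Subsingleton (((Ext R (ModuleCat.{u} R) i).obj (op (ModuleCat.of R M))).obj (ModuleCat.of R N))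

/-- `TorV R i M N` asserts that `Tor_i^R(M, N)` vanishes. -/
noncomputable def TorV (R : Type u) [CommRing R] (i : ℕ) (M N : Type u)
    [AddCommGroup M] [Module R M] [AddCommGroup N] [Module R N] : Prop :=
  Subsingleton (((Tor (ModuleCat.{u} R) i).obj (ModuleCat.of R M)).obj (ModuleCat.of R N))

/-- A system of parameters for a `d`-dimensional local ring: a list of `d` elements of the
maximal ideal generating an `𝔪`-primary ideal. -/
def IsSOP (R : Type u) [CommRing R] [IsLocalRing R] (d : ℕ) (xs : List R) : Prop :=
  xs.length = d ∧ (∀ x ∈ xs, x ∈ maximalIdeal R) ∧ (Ideal.ofList xs).radical = maximalIdeal R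

/-- `Ω` is a canonical module for the `d`-dimensional local ring `R`: it is finitely
generated, `Ext^i_R(k, Ω) = 0` for `i ≠ d`, and `Ext^d_R(k, Ω)` is one-dimensional over `k`
(equivalently, isomorphic to `k` as an `R`-module). -/
noncomputable def IsCanonicalModule (R : Type u) [CommRing R] [IsLocalRing R] (d : ℕ)
    (Ω : Type u) [AddCommGroup Ω] [Module R Ω] : Prop :=
  Module.Finite R Ω ∧ (∀ i : ℕ, i ≠ d → ExtV R i (ResidueField R) Ω) ∧
    Nonempty ((((Ext R (ModuleCat.{u} R) d).obj (op (ModuleCat.of R (ResidueField R)))).obj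
        (ModuleCat.of R Ω)) ≃ₗ[R] ResidueField R)

section Aux

open CategoryTheory Opposite IsLocalRing Limits

variable {R : Type u} [CommRing R]

private lemma artB' {M : Type u} [IsLocalRing R] [AddCommGroup M] [Module R M] [Module.Finite R M]
    (h : maximalIdeal R • (⊤ : Submodule R M) = ⊥) : IsArtinian R M := by
  have tor : Module.IsTorsionBySet R M (maximalIdeal R : Set R) := by
    intro x r
    have : (r : R) • x ∈ (⊥ : Submodule R M) := by
      rw [← h]; exact Submodule.smul_mem_smul r.2 Submodule.mem_top
    simpa using this
  letI : Module (R ⧸ maximalIdeal R) M := tor.module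
  haveI : IsScalarTower R (R ⧸ maximalIdeal R) M := tor.isScalarTower
  haveI : Module.Finite (R ⧸ maximalIdeal R) M :=
    Module.Finite.of_restrictScalars_finite R (R ⧸ maximalIdeal R) M
  letI : Field (R ⧸ maximalIdeal R) := Ideal.Quotient.field _
  haveI hart : IsArtinian (R ⧸ maximalIdeal R) M := isArtinian_of_fg_of_artinian'
  set g : Submodule R M → Submodule (R ⧸ maximalIdeal R) M := fun N =>
    { carrier := N
      add_mem' := fun ha hb => N.add_mem ha hb
      zero_mem' := N.zero_mem
      smul_mem' := by
        intro c m hm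
        obtain ⟨r, rfl⟩ := Ideal.Quotient.mk_surjective c
        rw [tor.mk_smul]
        exact N.smul_mem r hm } with hg
  have hmono : ∀ a b : Submodule R M, a < b → g a < g b := by
    intro a b hab
    constructor
    · intro x hx; exact hab.le hx
    · intro hba
      exact hab.not_ge (fun x hx => hba hx)
  rw [isArtinian_iff]
  exact Subrelation.wf (fun {a b} hab => hmono a b hab)
    (InvImage.wf g (isArtinian_iff _ _ |>.mp hart))

private lemma artA' {M : Type u} [IsLocalRing R] [IsNoetherianRing R] [AddCommGroup M] [Module R M]
    [Module.Finite R M] {N : ℕ}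
    (h : maximalIdeal R ^ N • (⊤ : Submodule R M) = ⊥) : IsArtinian R M := by
  induction N generalizing M with
  | zero =>
    rw [pow_zero, Ideal.one_eq_top, Submodule.top_smul] at h
    haveI : Subsingleton M := by
      constructor; intro a b
      have ha : a ∈ (⊥ : Submodule R M) := h ▸ Submodule.mem_top
      have hb : b ∈ (⊥ : Submodule R M) := h ▸ Submodule.mem_top
      simp only [Submodule.mem_bot] at ha hb; rw [ha, hb]
    infer_instance
  | succ N ih =>
    set K : Submodule R M := maximalIdeal R ^ N • ⊤ with hK
    haveI : Module.Finite R (M ⧸ K) := Module.Finite.quotient R K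
    have hQ : maximalIdeal R ^ N • (⊤ : Submodule R (M ⧸ K)) = ⊥ := by
      have h1 : Submodule.map K.mkQ (maximalIdeal R ^ N • ⊤)
          = maximalIdeal R ^ N • (⊤ : Submodule R (M ⧸ K)) := by
        rw [Submodule.map_smul'', Submodule.map_top, Submodule.range_mkQ]
      rw [← h1, ← hK]
      refine le_bot_iff.mp (Submodule.map_le_iff_le_comap.mpr ?_)
      rw [Submodule.comap_bot, Submodule.ker_mkQ]
    haveI : IsArtinian R (M ⧸ K) := ih hQ
    have hmK : maximalIdeal R • K = ⊥ := by
      rw [hK, ← mul_smul, ← pow_succ']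
      exact h
    haveI : IsNoetherian R M := isNoetherian_of_isNoetherianRing_of_finite R M
    haveI : Module.Finite R K := (Module.Finite.iff_fg).mpr (IsNoetherian.noetherian K)
    haveI : IsArtinian R K := by
      apply artB'
      have hmap : Submodule.map K.subtype (maximalIdeal R • (⊤ : Submodule R K)) =
          Submodule.map K.subtype ⊥ := by
        rw [Submodule.map_smul'', Submodule.map_top, Submodule.range_subtype,
          Submodule.map_bot, hmK]
      exact Submodule.map_injective_of_injective K.injective_subtype hmap
    exact isArtinian_of_range_eq_ker K.subtype K.mkQ
      (by rw [Submodule.range_subtype, Submodule.ker_mkQ])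

private lemma pit' [IsLocalRing R] [IsNoetherianRing R] (x : R)
    (hmin : maximalIdeal R ∈ (Ideal.span {x}).minimalPrimes)
    (q p : Ideal R) (hq : q.IsPrime) (hp : p.IsPrime) (hqp : q < p)
    (hpm : p < maximalIdeal R) : False := by
  obtain ⟨⟨hmpr, hxm⟩, hminim⟩ := hmin
  have hxp : x ∉ p := by
    intro hxp
    exact hpm.not_ge (hminim ⟨hp, (Ideal.span_le.mpr (by simpa using hxp))⟩ hpm.le)
  -- radical of (x) is 𝔪
  have hrad : (Ideal.span {x}).radical = maximalIdeal R := by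
    rw [Ideal.radical_eq_sInf]
    apply le_antisymm
    · exact sInf_le ⟨hxm, hmpr⟩
    · refine le_sInf fun J ⟨hJx, hJpr⟩ => hminim ⟨hJpr, hJx⟩ (le_maximalIdeal hJpr.ne_top)
  obtain ⟨n₀, hn₀⟩ := Ideal.exists_radical_pow_le_of_fg (Ideal.span {x})
    (IsNoetherian.noetherian _)
  rw [hrad] at hn₀
  -- R/(x) is Artinian
  haveI : IsArtinian R (R ⧸ Ideal.span {x}) := by
    apply artA' (N := n₀)
    rw [eq_bot_iff]
    refine Submodule.smul_le.mpr fun r hr m _ => ?_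
    obtain ⟨s, rfl⟩ := Submodule.mkQ_surjective (Ideal.span {x}) m
    have hrs : r • s ∈ Ideal.span {x} := by
      rw [smul_eq_mul]; exact Ideal.mul_mem_right s _ (hn₀ hr)
    rw [← map_smul, Submodule.mem_bot, Submodule.mkQ_apply]
    exact (Submodule.Quotient.mk_eq_zero _).mpr hrs
  set O := Localization.AtPrime p
  set f := algebraMap R O
  have hxc : x ∈ p.primeCompl := hxp
  set Sn : ℕ → Ideal R := fun n => Ideal.comap f (Ideal.map f (p ^ n)) with hSn
  have hSmono : ∀ {a b : ℕ}, a ≤ b → Sn b ≤ Sn a := fun hab =>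
    Ideal.comap_mono (Ideal.map_mono (Ideal.pow_le_pow_right hab))
  -- the descending chain in R/(x)
  set F : ℕ →o (Submodule R (R ⧸ Ideal.span {x}))ᵒᵈ :=
    ⟨fun n => Submodule.map (Ideal.span {x}).mkQ (Sn n ⊔ Ideal.span {x}),
     fun a b hab => Submodule.map_mono (sup_le_sup_right (hSmono hab) _)⟩ with hF
  obtain ⟨n, hstab⟩ := IsArtinian.monotone_stabilizes F
  have hJ : ∀ m, n ≤ m → Sn m ⊔ Ideal.span {x} = Sn n ⊔ Ideal.span {x} := by
    intro m hm
    have := hstab m hm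
    have h2 : Submodule.comap (Ideal.span {x}).mkQ (F n) =
        Submodule.comap (Ideal.span {x}).mkQ (F m) := by rw [this]
    change Submodule.comap (Ideal.span {x}).mkQ (Submodule.map (Ideal.span {x}).mkQ (Sn n ⊔ Ideal.span {x})) =
      Submodule.comap (Ideal.span {x}).mkQ (Submodule.map (Ideal.span {x}).mkQ (Sn m ⊔ Ideal.span {x})) at h2
    simpa only [hF, OrderHom.coe_mk, Submodule.comap_map_mkQ,
      sup_comm (Ideal.span {x}), sup_assoc, sup_idem] using h2.symm
  -- key algebraic step : Sn (n+1) = Sn (n+2)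
  have hkey : Sn (n + 1) ≤ Sn (n + 2) ⊔ Ideal.span {x} * Sn (n + 1) := by
    intro a ha
    have h1 : a ∈ Sn (n + 2) ⊔ Ideal.span {x} := by
      rw [hJ (n+2) (by omega), ← hJ (n+1) (by omega)]
      exact Submodule.mem_sup_left ha
    obtain ⟨b, hb, c, hc, rfl⟩ := Submodule.mem_sup.mp h1
    obtain ⟨t, rfl⟩ := Ideal.mem_span_singleton'.mp hc
    have htx : t * x ∈ Sn (n + 1) := by
      have := (Sn (n+1)).add_mem ha (neg_mem ((hSmono (by omega : n+1 ≤ n+2)) hb))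
      simpa using this
    have ht : t ∈ Sn (n + 1) := by
      have hunit : IsUnit (f x) := IsLocalization.map_units O ⟨x, hxc⟩
      obtain ⟨u, hu⟩ := hunit
      have : f t * f x ∈ Ideal.map f (p ^ (n+1)) := by
        rw [← map_mul]; exact htx
      have h3 : f t ∈ Ideal.map f (p ^ (n+1)) := by
        have h4 := Ideal.mul_mem_right (↑u⁻¹) _ this
        rwa [mul_assoc, ← hu, Units.mul_inv, mul_one] at h4
      exact h3
    refine Submodule.add_mem _ (Submodule.mem_sup_left hb) (Submodule.mem_sup_right ?_)
    rw [mul_comm t x]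
    exact Ideal.mul_mem_mul (Ideal.mem_span_singleton_self x) ht
  have hSeq : Sn (n + 1) = Sn (n + 2) := by
    refine le_antisymm ?_ (hSmono (by omega))
    refine Submodule.le_of_le_smul_of_le_jacobson_bot (I := Ideal.span {x}) (IsNoetherian.noetherian _) ?_ ?_
    · rw [jacobson_eq_maximalIdeal ⊥ bot_ne_top]
      exact Ideal.span_le.mpr (by simpa using hxm (Ideal.mem_span_singleton_self x))
    · rw [Ideal.smul_eq_mul]; exact hkey
  -- transfer to the localization
  have hPeq : Ideal.map f p ^ (n + 1) = Ideal.map f p ^ (n + 2) := by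
    have h5 : Ideal.map f (Sn (n+1)) = Ideal.map f (Sn (n+2)) := by rw [hSeq]
    rwa [hSn, IsLocalization.map_comap p.primeCompl O, IsLocalization.map_comap p.primeCompl O,
      Ideal.map_pow, Ideal.map_pow] at h5
  haveI : IsNoetherianRing O := IsLocalization.isNoetherianRing p.primeCompl O inferInstance
  have hPbot : Ideal.map f p ^ (n + 1) = ⊥ := by
    refine Submodule.eq_bot_of_le_smul_of_le_jacobson_bot (Ideal.map f p) _
      (IsNoetherian.noetherian _) ?_ ?_
    · rw [Ideal.smul_eq_mul, ← pow_succ']; exact le_of_eq hPeq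
    · haveI := Localization.AtPrime.isLocalRing p
      rw [jacobson_eq_maximalIdeal ⊥ bot_ne_top]
      exact le_of_eq (Localization.AtPrime.map_eq_maximalIdeal)
  -- contradiction via q
  have hdisj : Disjoint (p.primeCompl : Set R) (q : Set R) :=
    Set.disjoint_left.mpr fun a hap haq => hap (hqp.le haq)
  have hQpr : (Ideal.map f q).IsPrime :=
    IsLocalization.isPrime_of_isPrime_disjoint p.primeCompl O q hq hdisj
  have hPQ : Ideal.map f p ≤ Ideal.map f q := by
    have : Ideal.map f p ^ (n+1) ≤ Ideal.map f q := hPbot ▸ bot_le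
    exact hQpr.le_of_pow_le this
  have hpq : p ≤ q := by
    have h6 : Ideal.comap f (Ideal.map f p) ≤ Ideal.comap f (Ideal.map f q) :=
      Ideal.comap_mono hPQ
    rw [show Ideal.comap f (Ideal.map f q) = q from
      IsLocalization.comap_map_of_isPrime_disjoint p.primeCompl O hq hdisj] at h6
    exact le_trans Ideal.le_comap_map h6
  exact hqp.not_ge hpq


private lemma exists_lt_lt_lt' (R : Type u) [CommRing R] [IsLocalRing R] (d : ℕ) (hd : 2 ≤ d)
    (hdim : ringKrullDim R = d) :
    ∃ q p : Ideal R, q.IsPrime ∧ p.IsPrime ∧ q < p ∧ p < maximalIdeal R := by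
  by_contra hcon
  have hlen : ∀ c : LTSeries (PrimeSpectrum R), c.length ≤ 1 := by
    intro c
    by_contra hc
    push_neg at hc
    have h2 : 2 ≤ c.length := hc
    have i01 : (⟨0, by omega⟩ : Fin (c.length + 1)) < ⟨1, by omega⟩ := by
      exact Fin.mk_lt_mk.mpr (by omega)
    have i12 : (⟨1, by omega⟩ : Fin (c.length + 1)) < ⟨2, by omega⟩ := by
      exact Fin.mk_lt_mk.mpr (by omega)
    refine hcon ⟨(c.toFun ⟨0, by omega⟩).asIdeal, (c.toFun ⟨1, by omega⟩).asIdeal,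
      (c.toFun _).2, (c.toFun _).2, c.strictMono i01, ?_⟩
    calc (c.toFun ⟨1, by omega⟩).asIdeal < (c.toFun ⟨2, by omega⟩).asIdeal := c.strictMono i12
      _ ≤ maximalIdeal R := le_maximalIdeal (c.toFun _).2.ne_top
  have hle : ringKrullDim R ≤ (1 : ℕ) := by
    rw [ringKrullDim, Order.krullDim]
    exact iSup_le fun c => by exact_mod_cast hlen c
  rw [hdim] at hle
  have : d ≤ 1 := by exact_mod_cast hle
  omega

private lemma subsing_of_isZero' {R : Type u} [Ring R] {M : ModuleCat.{u} R} (h : IsZero M) :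
    Subsingleton M := by
  constructor
  intro a b
  have hid : 𝟙 M = (0 : M ⟶ M) := h.eq_of_src _ _
  calc a = (𝟙 M : M ⟶ M) a := rfl
    _ = (0 : M ⟶ M) a := by rw [hid]
    _ = 0 := rfl
    _ = (0 : M ⟶ M) b := rfl
    _ = (𝟙 M : M ⟶ M) b := by rw [hid]
    _ = b := rfl

private lemma extV_of_injective_of_homzero' (R : Type u) [CommRing R] (A E : Type u)
    [AddCommGroup A] [Module R A] [AddCommGroup E] [Module R E]
    (hE : Module.Injective R E) (h0 : ∀ φ : A →ₗ[R] E, φ = 0) (i : ℕ) :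
    Subsingleton (((Ext R (ModuleCat.{u} R) i).obj (op (ModuleCat.of R A))).obj
      (ModuleCat.of R E)) := by
  haveI : Injective (ModuleCat.of R E) := (Module.injective_iff_injective_object R E).mp hE
  let X : ModuleCat.{u} R := ModuleCat.of R A
  let P : ProjectiveResolution X := ProjectiveResolution.of X
  have hd : ∀ (a b : ℕ) (φ : P.complex.X a ⟶ ModuleCat.of R E),
      ((P.complex.linearYonedaObj R (ModuleCat.of R E)).d a b) φ = P.complex.d b a ≫ φ := by
    intro a b φ
    rw [ChainComplex.linearYonedaObj_d]
    rfl
  have hex : (P.complex.linearYonedaObj R (ModuleCat.of R E)).ExactAt i := by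
    cases i with
    | zero =>
      rw [HomologicalComplex.exactAt_iff' _ 0 0 1 (by simp) (by simp),
        ShortComplex.moduleCat_exact_iff]
      intro f hf
      have hf' : P.complex.d 1 0 ≫ f = 0 := by rw [← hd 0 1 f]; exact hf
      have hg := P.exact₀.comp_descToInjective f hf'
      set g := P.exact₀.descToInjective f hf' with hgdef
      have hgz : g = 0 := by
        have e : (ShortComplex.mk (P.complex.d 1 0) (P.π.f 0)
            P.complex_d_comp_π_f_zero).X₃ ≅ X :=
          HomologicalComplex.singleObjXSelf (ComplexShape.down ℕ) 0 X
        have : e.inv ≫ g = 0 := ModuleCat.hom_ext (by rw [ModuleCat.hom_zero]; exact h0 _)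
        calc g = e.hom ≫ (e.inv ≫ g) := by rw [← Category.assoc, e.hom_inv_id, Category.id_comp]
          _ = 0 := by rw [this, comp_zero]
      refine ⟨0, ?_⟩
      rw [map_zero, ← hg, hgz, comp_zero]
      rfl
    | succ n =>
      rw [HomologicalComplex.exactAt_iff' _ n (n+1) (n+2) (by simp) (by simp),
        ShortComplex.moduleCat_exact_iff]
      intro f hf
      have hf' : P.complex.d (n+2) (n+1) ≫ f = 0 := by rw [← hd (n+1) (n+2) f]; exact hf
      refine ⟨(P.exact_succ n).descToInjective f hf', ?_⟩
      show ((P.complex.linearYonedaObj R (ModuleCat.of R E)).d n (n+1))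
        ((P.exact_succ n).descToInjective f hf') = f
      rw [hd n (n+1)]
      exact (P.exact_succ n).comp_descToInjective f hf'
  have hz : IsZero ((P.complex.linearYonedaObj R (ModuleCat.of R E)).homology i) :=
    (HomologicalComplex.exactAt_iff_isZero_homology _ i).mp hex
  exact subsing_of_isZero' (hz.of_iso (P.isoExt i (ModuleCat.of R E)))


end Aux

/-- over a Cohen–Macaulay Noetherian local ring of dimension `d ≥ 2`, if `x ∈ 𝔪`
is a nonzerodivisor and `𝔭` is a minimal prime over `(x)`, then `𝔭 ≠ 𝔪`, the injective hull
`E = E(R/𝔭)` lies in `hCM(R)` (indeed `Ext^i_R(k, E) = 0` for all `i`), `x` kills a nonzero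
element of `E`, and no system of parameters starting with `x` is weakly `E`-regular. -/

theorem stmt1 (R : Type u) [CommRing R] [IsLocalRing R] [IsNoetherianRing R]
    (d : ℕ) (hd : 2 ≤ d) (hdim : ringKrullDim R = d)
    (hCMring : ∀ i < d, ExtV R i (ResidueField R) R)
    (x : R) (hx : x ∈ maximalIdeal R) (hxreg : x ∈ nonZeroDivisors R)
    (𝔭 : Ideal R) (h𝔭 : 𝔭 ∈ (Ideal.span {x}).minimalPrimes)
    (E : Type u) [AddCommGroup E] [Module R E] (hE : Module.Injective R E)
    (ι : (R ⧸ 𝔭) →ₗ[R] E) (hι : Function.Injective ι)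
    (hess : ∀ N : Submodule R E, N ≠ ⊥ → N ⊓ LinearMap.range ι ≠ ⊥) :
    𝔭 ≠ maximalIdeal R ∧
    Subsingleton (ResidueField R →ₗ[R] E) ∧
    (∀ i : ℕ, ExtV R i (ResidueField R) E) ∧
    (∃ e : E, e ≠ 0 ∧ x • e = 0) ∧
    (∀ xs : List R, xs.head? = some x → IsSOP R d xs →
      ¬ RingTheory.Sequence.IsWeaklyRegular E xs) := by
  have h𝔭pr : 𝔭.IsPrime := h𝔭.1.1
  have hx𝔭 : x ∈ 𝔭 := h𝔭.1.2 (Ideal.mem_span_singleton_self x)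
  have hne : 𝔭 ≠ maximalIdeal R := by
    intro heq
    obtain ⟨q, p, hq, hp, hqp, hpm⟩ := exists_lt_lt_lt' R d hd hdim
    exact pit' x (heq ▸ h𝔭) q p hq hp hqp hpm
  have hzero : ∀ φ : ResidueField R →ₗ[R] E, φ = 0 := by
    intro φ
    by_contra hφ
    have he : φ (Ideal.Quotient.mk _ 1) ≠ 0 := by
      intro h0
      apply hφ
      ext z
      obtain ⟨r, rfl⟩ := Ideal.Quotient.mk_surjective z
      have hz : (Ideal.Quotient.mk (maximalIdeal R) r : ResidueField R)
          = r • (Ideal.Quotient.mk (maximalIdeal R) 1) := by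
        show (Submodule.Quotient.mk r : R ⧸ maximalIdeal R)
          = r • (Submodule.Quotient.mk 1 : R ⧸ maximalIdeal R)
        rw [← Submodule.Quotient.mk_smul, smul_eq_mul, mul_one]
      rw [hz]; erw [map_smul, h0, smul_zero]
      rfl
    set e := φ (Ideal.Quotient.mk _ 1) with hee
    have hme : ∀ m ∈ maximalIdeal R, m • e = 0 := by
      intro m hm
      rw [hee]; erw [← map_smul]
      have h1 : m • (Ideal.Quotient.mk (maximalIdeal R) 1 : ResidueField R) = 0 := by
        have : m • (Ideal.Quotient.mk (maximalIdeal R) 1 : ResidueField R)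
            = Ideal.Quotient.mk (maximalIdeal R) m := by
          show m • (Submodule.Quotient.mk 1 : R ⧸ maximalIdeal R)
            = (Submodule.Quotient.mk m : R ⧸ maximalIdeal R)
          rw [← Submodule.Quotient.mk_smul, smul_eq_mul, mul_one]
        rw [this, Ideal.Quotient.eq_zero_iff_mem]
        exact hm
      erw [h1, map_zero]
    have hNbot : Submodule.span R {e} ≠ ⊥ := by
      rw [Ne, Submodule.span_singleton_eq_bot]
      exact he
    obtain ⟨v, hv, hv0⟩ := Submodule.exists_mem_ne_zero_of_ne_bot
      (hess (Submodule.span R {e}) hNbot)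
    obtain ⟨hvN, u, hu⟩ := Submodule.mem_inf.mp hv
    obtain ⟨r, hr⟩ := Submodule.mem_span_singleton.mp hvN
    have hu0 : u ≠ 0 := by rintro rfl; rw [map_zero] at hu; exact hv0 hu.symm
    obtain ⟨s, rfl⟩ := Submodule.Quotient.mk_surjective 𝔭 u
    have hs : s ∉ 𝔭 := fun hs => hu0 ((Submodule.Quotient.mk_eq_zero 𝔭).mpr hs)
    have hm𝔭 : maximalIdeal R ≤ 𝔭 := by
      intro m hm
      have h2 : ι (m • Submodule.Quotient.mk s) = 0 := by
        rw [map_smul, hu, ← hr, smul_comm, hme m hm, smul_zero]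
      have h3 : m • (Submodule.Quotient.mk s : R ⧸ 𝔭) = 0 := hι (by rw [h2, map_zero])
      rw [← Submodule.Quotient.mk_smul, Submodule.Quotient.mk_eq_zero, smul_eq_mul] at h3
      exact (h𝔭pr.mem_or_mem h3).resolve_right hs
    exact hne (le_antisymm (le_maximalIdeal h𝔭pr.ne_top) hm𝔭)
  have hsub : Subsingleton (ResidueField R →ₗ[R] E) :=
    ⟨fun a b => by rw [hzero a, hzero b]⟩
  have hpart4 : ∃ e : E, e ≠ 0 ∧ x • e = 0 := by
    refine ⟨ι (Submodule.Quotient.mk 1), ?_, ?_⟩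
    · intro h0
      have : (Submodule.Quotient.mk 1 : R ⧸ 𝔭) = 0 := hι (by rw [h0, map_zero])
      rw [Submodule.Quotient.mk_eq_zero] at this
      exact h𝔭pr.ne_top (Ideal.eq_top_of_isUnit_mem _ this isUnit_one)
    · rw [← map_smul, ← Submodule.Quotient.mk_smul, smul_eq_mul, mul_one]
      have : (Submodule.Quotient.mk x : R ⧸ 𝔭) = 0 :=
        (Submodule.Quotient.mk_eq_zero 𝔭).mpr hx𝔭
      rw [this, map_zero]
  refine ⟨hne, hsub, fun i => extV_of_injective_of_homzero' R (ResidueField R) E hE hzero i,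
    hpart4, ?_⟩
  rintro xs hhead hsop hreg
  obtain ⟨e, he0, hxe⟩ := hpart4
  match xs, hhead with
  | x' :: tl, hhead =>
    have hx' : x' = x := by simpa using hhead
    subst hx'
    have hsm := ((RingTheory.Sequence.isWeaklyRegular_cons_iff E x' tl).mp hreg).1
    exact he0 (hsm (show x' • e = x' • 0 by rw [smul_zero, hxe]))
end

section
/- Let (R, 𝔪, k) be a Cohen–Macaulay Noetherian local ring of Krull dimension d and let M be an R-module admitting an exact sequence 0 → C_n → C_{n−1} → ⋯ → C_1 → C_0 → M → 0 in which every C_j satisfies Ext^i_R(k, C_j) = 0 for all i < d (a left hCM(R)-resolution of length n). Then Ext^i_R(k, M) = 0 for all i < d − n; that is, E-dp(M) + n ≥ d. -/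
/-!
Common setup: `(R, 𝔪, k)` is a commutative Noetherian local ring of Krull dimension `d`.
We express vanishing of `Ext^i_R(M, N)` and `Tor_i^R(M, N)` via the categorical
`Ext`/`Tor` functors on `ModuleCat R`.
-/

open CategoryTheory Opposite IsLocalRing

universe u

/-! ### Auxiliary machinery -/

open Limits

section AuxMachinery

variable {R : Type u} [CommRing R]

/-- A zero object of `ModuleCat` has subsingleton carrier. -/
lemma Stmt11Aux.subsingleton_of_isZero {X : ModuleCat.{u} R} (h : IsZero X) :
    Subsingleton X := by
  have h0 : (𝟙 X : X ⟶ X) = 0 := h.eq_of_src _ _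
  refine ⟨fun a b => ?_⟩
  have ha := LinearMap.congr_fun (congrArg ModuleCat.Hom.hom h0) a
  have hb := LinearMap.congr_fun (congrArg ModuleCat.Hom.hom h0) b
  rw [ModuleCat.id_apply] at ha hb
  simp only [ModuleCat.hom_zero, LinearMap.zero_apply] at ha hb
  rw [ha, hb]

/-- Functoriality (postcomposition) of `linearYonedaObj` in the second variable. -/
noncomputable def Stmt11Aux.mapP (K : ChainComplex (ModuleCat.{u} R) ℕ)
    {Y Z : ModuleCat.{u} R} (φ : Y ⟶ Z) :
    K.linearYonedaObj R Y ⟶ K.linearYonedaObj R Z where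
  f i := ModuleCat.ofHom (Linear.rightComp R (K.X i) φ)
  comm' i j hij := by
    ext h
    show K.d j i ≫ (h ≫ φ) = (K.d j i ≫ h) ≫ φ
    exact (Category.assoc _ _ _).symm

lemma Stmt11Aux.isZero_homology_of_subsingleton (L : CochainComplex (ModuleCat.{u} R) ℕ)
    (i : ℕ) (h : Subsingleton (L.X i)) : IsZero (L.homology i) := by
  rw [← HomologicalComplex.exactAt_iff_isZero_homology, HomologicalComplex.exactAt_iff]
  exact ShortComplex.exact_of_isZero_X₂ _ (@ModuleCat.isZero_of_subsingleton _ _ (L.X i) h)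

variable (i : ℕ) (k₀ A B M : Type u)
  [AddCommGroup k₀] [Module R k₀] [AddCommGroup A] [Module R A]
  [AddCommGroup B] [Module R B] [AddCommGroup M] [Module R M]

/-- `Ext^i(k₀, N) = 0` whenever `N` is a zero module. -/
lemma Stmt11Aux.extV_of_subsingleton (hN : Subsingleton M) : ExtV R i k₀ M := by
  let P : ProjectiveResolution (ModuleCat.of R k₀) := ProjectiveResolution.of _
  have iso := P.isoExt (R := R) i (ModuleCat.of R M)
  have hsub : Subsingleton ((P.complex.linearYonedaObj R (ModuleCat.of R M)).X i) := by
    refine ⟨fun f g => ?_⟩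
    exact (@ModuleCat.isZero_of_subsingleton _ _ (ModuleCat.of R M) hN).eq_of_tgt f g
  have hz := Stmt11Aux.isZero_homology_of_subsingleton _ i hsub
  exact Stmt11Aux.subsingleton_of_isZero (hz.of_iso iso)

/-- The key step: from a short exact sequence `0 → A → B → M → 0`, if `Ext^i(k₀, B) = 0`
and `Ext^{i+1}(k₀, A) = 0` then `Ext^i(k₀, M) = 0`. Proved via the homology long exact
sequence for the complexes `Hom(P•, -)` with `P•` a projective resolution of `k₀`. -/
lemma Stmt11Aux.extV_of_ses (f : A →ₗ[R] B) (g : B →ₗ[R] M)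
    (hf : Function.Injective f) (hg : Function.Surjective g)
    (hfg : LinearMap.range f = LinearMap.ker g) (hB : ExtV R i k₀ B)
    (hA : ExtV R (i+1) k₀ A) : ExtV R i k₀ M := by
  let P : ProjectiveResolution (ModuleCat.of R k₀) := ProjectiveResolution.of _
  let fc : ModuleCat.of R A ⟶ ModuleCat.of R B := ModuleCat.ofHom f
  let gc : ModuleCat.of R B ⟶ ModuleCat.of R M := ModuleCat.ofHom g
  have hfg0 : fc ≫ gc = 0 := by
    ext x
    have hx : f x ∈ LinearMap.ker g := by rw [← hfg]; exact ⟨x, rfl⟩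
    exact hx
  have hzero : Stmt11Aux.mapP P.complex fc ≫ Stmt11Aux.mapP P.complex gc = 0 := by
    ext j h
    show ((h : P.complex.X j ⟶ ModuleCat.of R A) ≫ fc) ≫ gc = 0
    exact (Category.assoc _ _ _).trans ((congrArg (fun t => (h : P.complex.X j ⟶ ModuleCat.of R A) ≫ t) hfg0).trans comp_zero)
  let T : ShortComplex (CochainComplex (ModuleCat.{u} R) ℕ) :=
    ShortComplex.mk (Stmt11Aux.mapP P.complex fc) (Stmt11Aux.mapP P.complex gc) hzero
  have hT : T.ShortExact := by
    rw [HomologicalComplex.shortExact_iff_degreewise_shortExact]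
    intro j
    haveI hmono : Mono ((T.map (HomologicalComplex.eval _ _ j)).f) := by
      rw [ModuleCat.mono_iff_injective]
      intro h1 h2 heq
      have heq' : (h1 : P.complex.X j ⟶ ModuleCat.of R A) ≫ fc
          = (h2 : P.complex.X j ⟶ ModuleCat.of R A) ≫ fc := heq
      exact ModuleCat.hom_ext (LinearMap.ext fun x => hf (LinearMap.congr_fun (congrArg ModuleCat.Hom.hom heq') x))
    haveI hepi : Epi ((T.map (HomologicalComplex.eval _ _ j)).g) := by
      rw [ModuleCat.epi_iff_surjective]
      intro h
      let hM : P.complex.X j ⟶ ModuleCat.of R M := h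
      haveI : Epi gc := (ModuleCat.epi_iff_surjective gc).mpr hg
      refine ⟨Projective.factorThru hM gc, ?_⟩
      exact Projective.factorThru_comp hM gc
    refine ⟨?_⟩
    rw [ShortComplex.moduleCat_exact_iff]
    intro h hh
    let hB : P.complex.X j ⟶ ModuleCat.of R B := h
    have hh' : hB ≫ gc = 0 := hh
    have hmem : ∀ x, hB x ∈ LinearMap.range f := by
      intro x
      rw [hfg]
      exact LinearMap.congr_fun (congrArg ModuleCat.Hom.hom hh') x
    let e := LinearEquiv.ofInjective f hf
    let h' : P.complex.X j ⟶ ModuleCat.of R A :=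
      ModuleCat.ofHom (e.symm.toLinearMap ∘ₗ
        LinearMap.codRestrict (LinearMap.range f) hB.hom hmem)
    refine ⟨h', ?_⟩
    show h' ≫ fc = hB
    ext x
    show f (e.symm ⟨hB x, hmem x⟩) = hB x
    calc f (e.symm ⟨hB x, hmem x⟩) = ↑(e (e.symm ⟨hB x, hmem x⟩)) :=
          (LinearEquiv.ofInjective_apply f _).symm
      _ = hB x := by rw [e.apply_symm_apply]
  -- homology long exact sequence
  have hrel : (ComplexShape.up ℕ).Rel i (i+1) := rfl
  have hex3 := hT.homology_exact₃ i (i+1) hrel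
  have isoA := P.isoExt (R := R) (i+1) (ModuleCat.of R A)
  have isoB := P.isoExt (R := R) i (ModuleCat.of R B)
  have isoM := P.isoExt (R := R) i (ModuleCat.of R M)
  have hzA : IsZero (T.X₁.homology (i+1)) :=
    IsZero.of_iso (@ModuleCat.isZero_of_subsingleton _ _ _ hA) isoA.symm
  have hzB : IsZero (T.X₂.homology i) :=
    IsZero.of_iso (@ModuleCat.isZero_of_subsingleton _ _ _ hB) isoB.symm
  have hf0 : HomologicalComplex.homologyMap T.g i = 0 := hzB.eq_of_src _ _
  have hg0 : hT.δ i (i+1) hrel = 0 := hzA.eq_of_tgt _ _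
  have hzM : IsZero (T.X₃.homology i) := hex3.isZero_X₂ hf0 hg0
  exact Stmt11Aux.subsingleton_of_isZero (IsZero.of_iso hzM isoM)

end AuxMachinery

/-- The main induction, for an arbitrary fixed first argument `k₀` of `Ext`. -/
lemma Stmt11Aux.main (R : Type u) [CommRing R] (d : ℕ) (k₀ : Type u)
    [AddCommGroup k₀] [Module R k₀] :
    ∀ (n : ℕ), ∀ (M : Type u) [AddCommGroup M] [Module R M]
      (C : ℕ → Type u) [∀ j, AddCommGroup (C j)] [∀ j, Module R (C j)],
      (∀ j ≤ n, ∀ i < d, ExtV R i k₀ (C j)) →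
      (∀ j, n < j → Subsingleton (C j)) →
      ∀ (g : ∀ j : ℕ, C (j + 1) →ₗ[R] C j) (ε : C 0 →ₗ[R] M),
      Function.Surjective ε →
      LinearMap.range (g 0) = LinearMap.ker ε →
      (∀ j : ℕ, LinearMap.range (g (j + 1)) = LinearMap.ker (g j)) →
      ∀ i : ℕ, i < d - n → ExtV R i k₀ M := by
  intro n
  induction n with
  | zero =>
    intro M _ _ C _ _ hC hCzero g ε hε hex0 _hex i hi
    haveI hC1 : Subsingleton (C 1) := hCzero 1 one_pos
    have hK : Subsingleton ↥(LinearMap.ker ε) := by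
      constructor
      rintro ⟨x, hx⟩ ⟨y, hy⟩
      rw [← hex0] at hx hy
      obtain ⟨a, rfl⟩ := hx
      obtain ⟨b, rfl⟩ := hy
      exact Subtype.ext (congrArg (g 0) (Subsingleton.elim a b))
    exact Stmt11Aux.extV_of_ses i k₀ ↥(LinearMap.ker ε) (C 0) M
      (LinearMap.ker ε).subtype ε (Submodule.injective_subtype _) hε
      (Submodule.range_subtype _)
      (hC 0 le_rfl i (lt_of_lt_of_le hi (Nat.sub_le d 0)))
      (Stmt11Aux.extV_of_subsingleton _ _ _ hK)
  | succ n ih =>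
    intro M _ _ C _ _ hC hCzero g ε hε hex0 hex i hi
    have hKres : ∀ i' : ℕ, i' < d - n → ExtV R i' k₀ ↥(LinearMap.ker ε) := by
      refine ih ↥(LinearMap.ker ε) (fun j => C (j+1))
        (fun j hj i' hi' => hC (j+1) (by omega) i' hi')
        (fun j hj => hCzero (j+1) (by omega))
        (fun j => g (j+1))
        ((g 0).codRestrict (LinearMap.ker ε)
          (fun c => by rw [← hex0]; exact ⟨c, rfl⟩))
        ?_ ?_ (fun j => hex (j+1))
      · rintro ⟨x, hx⟩
        rw [← hex0] at hx
        obtain ⟨c, hc⟩ := hx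
        exact ⟨c, Subtype.ext hc⟩
      · rw [LinearMap.ker_codRestrict]
        exact hex 0
    exact Stmt11Aux.extV_of_ses i k₀ ↥(LinearMap.ker ε) (C 0) M
      (LinearMap.ker ε).subtype ε (Submodule.injective_subtype _) hε
      (Submodule.range_subtype _)
      (hC 0 (Nat.zero_le _) i (by omega))
      (hKres (i+1) (by omega))

/-- over a Cohen–Macaulay Noetherian local ring of dimension `d`, if `M` has a
left `hCM(R)`-resolution `0 → C_n → ⋯ → C_0 → M → 0` (encoded by modules `C j` which are
trivial for `j > n`), then `Ext^i_R(k, M) = 0` for all `i < d − n`. -/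
theorem stmt11 (R : Type u) [CommRing R] [IsLocalRing R] [IsNoetherianRing R]
    (d : ℕ) (hdim : ringKrullDim R = d)
    (hCMring : ∀ i < d, ExtV R i (ResidueField R) R)
    (n : ℕ) (M : Type u) [AddCommGroup M] [Module R M]
    (C : ℕ → Type u) [∀ j, AddCommGroup (C j)] [∀ j, Module R (C j)]
    (hC : ∀ j ≤ n, ∀ i < d, ExtV R i (ResidueField R) (C j))
    (hCzero : ∀ j, n < j → Subsingleton (C j))
    (g : ∀ j : ℕ, C (j + 1) →ₗ[R] C j) (ε : C 0 →ₗ[R] M)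
    (hε : Function.Surjective ε)
    (hex0 : LinearMap.range (g 0) = LinearMap.ker ε)
    (hex : ∀ j : ℕ, LinearMap.range (g (j + 1)) = LinearMap.ker (g j)) :
    ∀ i : ℕ, i < d - n → ExtV R i (ResidueField R) M :=
  Stmt11Aux.main R d (ResidueField R) n M C hC hCzero g ε hε hex0 hex
end
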